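/- Let η > 0, m > 0 and μ ∈ ℝ be constants, and let ρ, φ, V : ℝ × ℝ → ℝ be such that ρ(x,t) > 0 everywhere and ρ and φ are twice continuously differentiable. Suppose the continuity (Fokker–Planck) equation ∂_t ρ = −(η/m)·(∂_x ρ · ∂_x φ + ρ · ∂_x² φ) and the phase equation η·∂_t φ + (η²/(2m))·(∂_x φ)² + V − (μ·η²/(2m²))·(∂_x² √ρ)/√ρ = 0 hold at every (x,t). Then the complex function Ψ(x,t) = √(ρ(x,t)) · exp(i·φ(x,t)) satisfies i·η·∂_t Ψ = −(η²/(2m))·∂_x² Ψ + V·Ψ + (η²/(2m))·(1 − μ/m)·((∂_x² √ρ)/√ρ)·Ψ at every (x,t). -/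

import Mathlib

open Complex

/-- The central derivation of entropic quantum dynamics (one spatial dimension):
if the density `ρ` and phase `φ` satisfy the Fokker–Planck (continuity) equation and
the phase equation obtained from energy conservation, then `Ψ = √ρ · exp(iφ)` obeys
the nonlinear dynamical equation with current mass `m` and osmotic mass `μ`.
Functions of two variables are curried, `F x t`, with `x` the spatial and `t` the
time variable; `∂_t F (x,t) = deriv (F x) t`, `∂_x F (x,t) = deriv (fun y => F y t) x`. -/
theorem eqd_dynamical_equation
    (η m μ : ℝ) (hη : 0 < η) (hm : 0 < m)
    (ρ φ V : ℝ → ℝ → ℝ)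
    (hρpos : ∀ x t, 0 < ρ x t)
    (hρ : ContDiff ℝ 2 (Function.uncurry ρ))
    (hφ : ContDiff ℝ 2 (Function.uncurry φ))
    (hFP : ∀ x t, deriv (fun s => ρ x s) t
        = -(η / m) * (deriv (fun y => ρ y t) x * deriv (fun y => φ y t) x
            + ρ x t * deriv (deriv (fun y => φ y t)) x))
    (hphase : ∀ x t, η * deriv (fun s => φ x s) t
        + (η ^ 2 / (2 * m)) * (deriv (fun y => φ y t) x) ^ 2 + V x t
        - (μ * η ^ 2 / (2 * m ^ 2))
            * (deriv (deriv (fun y => Real.sqrt (ρ y t))) x / Real.sqrt (ρ x t)) = 0)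
    (Ψ : ℝ → ℝ → ℂ)
    (hΨ : ∀ x t, Ψ x t = (Real.sqrt (ρ x t) : ℂ) * Complex.exp (Complex.I * (φ x t : ℝ))) :
    ∀ x t, Complex.I * (η : ℂ) * deriv (fun s => Ψ x s) t
        = -((η : ℂ) ^ 2 / (2 * (m : ℂ))) * deriv (deriv (fun y => Ψ y t)) x
          + (V x t : ℂ) * Ψ x t
          + ((η : ℂ) ^ 2 / (2 * (m : ℂ))) * (1 - (μ : ℂ) / (m : ℂ))
              * ((deriv (deriv (fun y => Real.sqrt (ρ y t))) x / Real.sqrt (ρ x t) : ℝ) : ℂ)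
              * Ψ x t := by
  intro x t
  -- slice smoothness
  have hρX : ContDiff ℝ 2 (fun y => ρ y t) := hρ.comp (ContDiff.prodMk contDiff_id contDiff_const)
  have hφX : ContDiff ℝ 2 (fun y => φ y t) := hφ.comp (ContDiff.prodMk contDiff_id contDiff_const)
  have hρT : ContDiff ℝ 2 (fun s => ρ x s) := hρ.comp (ContDiff.prodMk contDiff_const contDiff_id)
  have hφT : ContDiff ℝ 2 (fun s => φ x s) := hφ.comp (ContDiff.prodMk contDiff_const contDiff_id)
  have hrX : ContDiff ℝ 2 (fun y => Real.sqrt (ρ y t)) := by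
    rw [contDiff_iff_contDiffAt]
    intro y
    exact (Real.contDiffAt_sqrt (hρpos y t).ne').comp y hρX.contDiffAt
  have derivDiff : ∀ (f : ℝ → ℝ), ContDiff ℝ 2 f → Differentiable ℝ (deriv f) := by
    intro f hf
    rw [show (2 : WithTop ℕ∞) = 1 + 1 from rfl, contDiff_succ_iff_deriv] at hf
    exact hf.2.2.differentiable one_ne_zero
  have hRpos : 0 < Real.sqrt (ρ x t) := Real.sqrt_pos.mpr (hρpos x t)
  have hRne : Real.sqrt (ρ x t) ≠ 0 := hRpos.ne'
  -- time derivative of Ψ x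
  have hρtd : HasDerivAt (fun s => ρ x s) (deriv (fun s => ρ x s) t) t :=
    ((hρT.differentiable two_ne_zero) t).hasDerivAt
  have hφtd : HasDerivAt (fun s => φ x s) (deriv (fun s => φ x s) t) t :=
    ((hφT.differentiable two_ne_zero) t).hasDerivAt
  have hsqt : HasDerivAt (fun s => Real.sqrt (ρ x s))
      (1 / (2 * Real.sqrt (ρ x t)) * deriv (fun s => ρ x s) t) t :=
    (Real.hasDerivAt_sqrt (hρpos x t).ne').comp t hρtd
  have hexpT : HasDerivAt (fun s => Complex.exp (Complex.I * (φ x s : ℝ)))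
      (Complex.exp (Complex.I * (φ x t : ℝ)) * (Complex.I * (deriv (fun s => φ x s) t : ℝ))) t :=
    (hφtd.ofReal_comp.const_mul Complex.I).cexp
  have hΨt : deriv (fun s => Ψ x s) t
      = ((1 / (2 * Real.sqrt (ρ x t)) * deriv (fun s => ρ x s) t : ℝ) : ℂ)
          * Complex.exp (Complex.I * (φ x t : ℝ))
        + (Real.sqrt (ρ x t) : ℂ) * (Complex.exp (Complex.I * (φ x t : ℝ))
            * (Complex.I * (deriv (fun s => φ x s) t : ℝ))) := by
    have hfun : (fun s => Ψ x s)
        = fun s => ((Real.sqrt (ρ x s) : ℂ)) * Complex.exp (Complex.I * (φ x s : ℝ)) :=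
      funext fun s => hΨ x s
    rw [hfun]
    exact ((hsqt.ofReal_comp).mul hexpT).deriv
  -- first spatial derivative of Ψ · t, as a function
  have hDx : ∀ y, HasDerivAt (fun z => Ψ z t)
      (((deriv (fun z => Real.sqrt (ρ z t)) y : ℝ) : ℂ)
          * Complex.exp (Complex.I * (φ y t : ℝ))
        + ((Real.sqrt (ρ y t) : ℝ) : ℂ) * (Complex.exp (Complex.I * (φ y t : ℝ))
            * (Complex.I * (deriv (fun z => φ z t) y : ℝ)))) y := by
    intro y
    have hfun : (fun z => Ψ z t)
        = fun z => ((Real.sqrt (ρ z t) : ℂ)) * Complex.exp (Complex.I * (φ z t : ℝ)) :=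
      funext fun z => hΨ z t
    rw [hfun]
    have h1 : HasDerivAt (fun z => Real.sqrt (ρ z t))
        (deriv (fun z => Real.sqrt (ρ z t)) y) y :=
      ((hrX.differentiable two_ne_zero) y).hasDerivAt
    have h2 : HasDerivAt (fun z => φ z t) (deriv (fun z => φ z t) y) y :=
      ((hφX.differentiable two_ne_zero) y).hasDerivAt
    exact (h1.ofReal_comp).mul ((h2.ofReal_comp.const_mul Complex.I).cexp)
  have hfun2 : deriv (fun z => Ψ z t)
      = fun y => ((deriv (fun z => Real.sqrt (ρ z t)) y : ℝ) : ℂ)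
          * Complex.exp (Complex.I * (φ y t : ℝ))
        + ((Real.sqrt (ρ y t) : ℝ) : ℂ) * (Complex.exp (Complex.I * (φ y t : ℝ))
            * (Complex.I * (deriv (fun z => φ z t) y : ℝ))) :=
    funext fun y => (hDx y).deriv
  -- second spatial derivative at x
  have hdr : HasDerivAt (deriv (fun z => Real.sqrt (ρ z t)))
      (deriv (deriv (fun z => Real.sqrt (ρ z t))) x) x :=
    ((derivDiff _ hrX) x).hasDerivAt
  have hdφ : HasDerivAt (deriv (fun z => φ z t))
      (deriv (deriv (fun z => φ z t)) x) x :=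
    ((derivDiff _ hφX) x).hasDerivAt
  have hrx : HasDerivAt (fun z => Real.sqrt (ρ z t))
      (deriv (fun z => Real.sqrt (ρ z t)) x) x :=
    ((hrX.differentiable two_ne_zero) x).hasDerivAt
  have hφxd : HasDerivAt (fun z => φ z t) (deriv (fun z => φ z t) x) x :=
    ((hφX.differentiable two_ne_zero) x).hasDerivAt
  have hexpX : HasDerivAt (fun y => Complex.exp (Complex.I * (φ y t : ℝ)))
      (Complex.exp (Complex.I * (φ x t : ℝ)) * (Complex.I * (deriv (fun z => φ z t) x : ℝ))) x :=
    (hφxd.ofReal_comp.const_mul Complex.I).cexp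
  have hΨxx : deriv (deriv (fun y => Ψ y t)) x
      = (((deriv (deriv (fun z => Real.sqrt (ρ z t))) x : ℝ) : ℂ)
            * Complex.exp (Complex.I * (φ x t : ℝ))
          + ((deriv (fun z => Real.sqrt (ρ z t)) x : ℝ) : ℂ)
            * (Complex.exp (Complex.I * (φ x t : ℝ))
                * (Complex.I * (deriv (fun z => φ z t) x : ℝ))))
        + (((deriv (fun z => Real.sqrt (ρ z t)) x : ℝ) : ℂ)
            * (Complex.exp (Complex.I * (φ x t : ℝ))
                * (Complex.I * (deriv (fun z => φ z t) x : ℝ)))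
          + (Real.sqrt (ρ x t) : ℂ)
            * (Complex.exp (Complex.I * (φ x t : ℝ))
                  * (Complex.I * (deriv (fun z => φ z t) x : ℝ))
                  * (Complex.I * (deriv (fun z => φ z t) x : ℝ))
              + Complex.exp (Complex.I * (φ x t : ℝ))
                  * (Complex.I * (deriv (deriv (fun z => φ z t)) x : ℝ)))) := by
    rw [hfun2]
    exact (((hdr.ofReal_comp).mul hexpX).add
      ((hrx.ofReal_comp).mul
        (hexpX.mul (hdφ.ofReal_comp.const_mul Complex.I)))).deriv
  -- value of the first spatial derivative of √ρ at x
  have hrx_eq : deriv (fun z => Real.sqrt (ρ z t)) x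
      = 1 / (2 * Real.sqrt (ρ x t)) * deriv (fun z => ρ z t) x := by
    have hρxd : HasDerivAt (fun z => ρ z t) (deriv (fun z => ρ z t) x) x :=
      ((hρX.differentiable two_ne_zero) x).hasDerivAt
    exact ((Real.hasDerivAt_sqrt (hρpos x t).ne').comp x hρxd).deriv
  rw [hrx_eq] at hΨxx
  -- cast equations
  have hR2 : Real.sqrt (ρ x t) ^ 2 = ρ x t := Real.sq_sqrt (hρpos x t).le
  have hRneC : (Real.sqrt (ρ x t) : ℂ) ≠ 0 := Complex.ofReal_ne_zero.mpr hRne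
  have hmneC : (m : ℂ) ≠ 0 := by exact_mod_cast hm.ne'
  have H0 : (Complex.I) ^ 2 = -1 := Complex.I_sq
  rw [hΨt, hΨxx, hΨ x t]
  push_cast
  have h1 := hFP x t
  rw [← hR2] at h1
  field_simp at h1
  have h2 := hphase x t
  field_simp at h2
  have H1c := congrArg (Complex.ofReal) h1
  have H2c := congrArg (Complex.ofReal) h2
  push_cast at H1c H2c
  field_simp [hRneC, hmneC]
  linear_combination
    (2 * Complex.I * (η : ℂ) * (m : ℂ)) * H1c
    + (-(2 * ((Real.sqrt (ρ x t) : ℝ) : ℂ))) * H2c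
    + (4 * (η : ℂ) * (m : ℂ) ^ 2 * ((Real.sqrt (ρ x t) : ℝ) : ℂ) ^ 2
        * ((deriv (fun s => φ x s) t : ℝ) : ℂ)) * H0
    + (2 * (η : ℂ) ^ 2 * (m : ℂ) * ((Real.sqrt (ρ x t) : ℝ) : ℂ) ^ 2
        * ((deriv (fun y => φ y t) x : ℝ) : ℂ) ^ 2) * H0
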